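/- Let (X,d) be a separable metric space and let λ be a locally finite Borel regular measure over X. Assume there exist constants C > 0 and N > 0 such that for every bounded set A ⊂ X and every family 𝓑 of closed balls such that each point of A is the center of some ball of 𝓑, there is a countable subfamily 𝓕 ⊂ 𝓑 with λ(A) ≤ C·λ(⋃_{B∈𝓕} B) and Σ_{B∈𝓕} χ_B ≤ N. Then the differentiation theorem holds for λ: for every f ∈ L¹_loc(λ), lim_{r→0} (1/λ(B(x,r))) ∫_{B(x,r)} f(y) dλ(y) = f(x) for λ-almost every x ∈ X. -/

import Mathlib

open MeasureTheory Metric Filter Set BoundedContinuousFunction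
open scoped ENNReal NNReal Topology

/-- The differentiation theorem holds for `lam`: averages on small closed balls of any
locally integrable function converge a.e. to the function. -/
def DiffThmHolds {X : Type*} [MetricSpace X] [MeasurableSpace X] (lam : Measure X) : Prop :=
  ∀ f : X → ℝ, (∀ x : X, ∃ U ∈ 𝓝 x, IntegrableOn f U lam) →
    ∀ᵐ x ∂lam, Filter.Tendsto
      (fun r : ℝ => ((lam (closedBall x r)).toReal)⁻¹ * ∫ y in closedBall x r, f y ∂lam)
      (𝓝[>] (0:ℝ)) (𝓝 (f x))


lemma aux_tsum_le_of_encard_le {ι : Type*} {S : Set ι} {n : ℕ} (hS : S.encard ≤ (n : ℕ∞))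
    (g : ι → ℝ≥0∞) (hg : ∀ i, i ∉ S → g i = 0) {c : ℝ≥0∞} (hgc : ∀ i, g i ≤ c) :
    ∑' i, g i ≤ n * c := by
  have hfin : S.Finite := Set.finite_of_encard_le_coe hS
  have h1 : ∑' i, g i = ∑ i ∈ hfin.toFinset, g i :=
    tsum_eq_sum (fun i hi => hg i (by simpa using hi))
  have hcard : hfin.toFinset.card ≤ n := by
    have : (hfin.toFinset.card : ℕ∞) ≤ n := by
      rw [← hfin.encard_eq_coe_toFinset_card]; exact hS
    exact_mod_cast this
  calc ∑' i, g i = ∑ i ∈ hfin.toFinset, g i := h1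
    _ ≤ hfin.toFinset.card • c := Finset.sum_le_card_nsmul _ _ c (fun i _ => hgc i)
    _ = (hfin.toFinset.card : ℝ≥0∞) * c := by rw [nsmul_eq_mul]
    _ ≤ n * c := mul_le_mul_left (by exact_mod_cast hcard) c

lemma aux_eq_zero_of_le_mul {a D : ℝ≥0∞} (hD : D ≠ ∞)
    (h : ∀ η : ℝ≥0∞, 0 < η → η ≠ ∞ → a ≤ D * η) : a = 0 := by
  refine le_antisymm ?_ zero_le
  refine ENNReal.le_of_forall_pos_le_add fun ε hε _ => ?_
  rw [zero_add]
  rcases eq_or_ne D 0 with hD0 | hD0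
  · simpa [hD0] using (h 1 one_pos ENNReal.one_ne_top).trans (by simp [hD0])
  · have hη : (0:ℝ≥0∞) < (ε : ℝ≥0∞) / D := ENNReal.div_pos (by exact_mod_cast hε.ne') hD
    have hη' : (ε : ℝ≥0∞) / D ≠ ∞ :=
      ENNReal.mul_ne_top ENNReal.coe_ne_top (ENNReal.inv_ne_top.2 hD0)
    calc a ≤ D * ((ε : ℝ≥0∞) / D) := h _ hη hη'
      _ = ε := ENNReal.mul_div_cancel hD0 hD

lemma aux_ae_pos_closedBall {X : Type*} [MetricSpace X] [MeasurableSpace X]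
    [TopologicalSpace.SeparableSpace X] (lam : Measure X) :
    ∀ᵐ x ∂lam, ∀ r : ℝ, 0 < r → 0 < lam (closedBall x r) := by
  haveI : SecondCountableTopology X := UniformSpace.secondCountable_of_separable X
  rw [ae_iff]
  set Z := {x : X | ¬ ∀ r : ℝ, 0 < r → 0 < lam (closedBall x r)} with hZdef
  have hZ : ∀ x : Z, ∃ r : ℝ, 0 < r ∧ lam (closedBall (x : X) r) = 0 := by
    rintro ⟨x, hx⟩
    simp only [hZdef, mem_setOf_eq, not_forall] at hx
    obtain ⟨r, hr, h0⟩ := hx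
    exact ⟨r, hr, by simpa using h0⟩
  choose r hr h0 using hZ
  have hcover : Z ⊆ ⋃ x : Z, ball (x : X) (r x) := fun x hx =>
    mem_iUnion.2 ⟨⟨x, hx⟩, mem_ball_self (hr _)⟩
  set s : Z → Set X := fun x => ball (x : X) (r x) with hs
  obtain ⟨T, Tc, hT⟩ := TopologicalSpace.isOpen_iUnion_countable s (fun x => isOpen_ball)
  have h1 : lam Z ≤ ∑' x : T, lam (s x) := by
    refine le_trans (measure_mono ?_) (measure_biUnion_le lam Tc _)
    rw [hT]; exact hcover
  have h2 : ∀ x : T, lam (s (x : Z)) = 0 := fun x =>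
    measure_mono_null ball_subset_closedBall (h0 x)
  simpa [h2] using h1

lemma aux_maximal {X : Type*} [MetricSpace X] [MeasurableSpace X] [BorelSpace X]
    (lam : Measure X) (C : ℝ≥0) (N : ℕ)
    (hyp : ∀ (A : Set X) (ℬ : Set (X × ℝ)),
      Bornology.IsBounded A →
      (∀ p ∈ ℬ, 0 < p.2) →
      (∀ x ∈ A, ∃ r : ℝ, 0 < r ∧ (x, r) ∈ ℬ) →
      ∃ F ⊆ ℬ, F.Countable ∧
        lam A ≤ (C : ℝ≥0∞) * lam (⋃ p ∈ F, closedBall p.1 p.2) ∧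
        ∀ y : X, {p ∈ F | y ∈ closedBall p.1 p.2}.encard ≤ (N : ℕ∞))
    (z : X) (δ : ℝ) (K : Set X) (hKm : MeasurableSet K)
    (hK : ∀ x ∈ ball z δ, ∀ r : ℝ, 0 < r → r < δ → closedBall x r ⊆ K)
    (w : X → ℝ≥0∞) (hw : AEMeasurable w lam)
    (T : ℝ≥0∞) (hT0 : T ≠ 0) (hTtop : T ≠ ∞) :
    lam {x | x ∈ ball z δ ∧ ∃ r : ℝ, 0 < r ∧ r < δ ∧
        T * lam (closedBall x r) < ∫⁻ y in closedBall x r, w y ∂lam}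
      ≤ (C : ℝ≥0∞) * (T⁻¹ * ((N : ℝ≥0∞) * ∫⁻ y in K, w y ∂lam)) := by
  set A := {x | x ∈ ball z δ ∧ ∃ r : ℝ, 0 < r ∧ r < δ ∧
      T * lam (closedBall x r) < ∫⁻ y in closedBall x r, w y ∂lam} with hA
  set ℬ : Set (X × ℝ) := {p | p.1 ∈ A ∧ 0 < p.2 ∧ p.2 < δ ∧
      T * lam (closedBall p.1 p.2) < ∫⁻ y in closedBall p.1 p.2, w y ∂lam} with hB
  have hAb : Bornology.IsBounded A :=
    Metric.isBounded_ball.subset (fun x hx => hx.1)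
  obtain ⟨F, hFB, hFc, hFmeas, hFover⟩ := hyp A ℬ hAb (fun p hp => hp.2.1)
    (fun x hx => by
      obtain ⟨r, hr0, hrδ, hlt⟩ := hx.2
      exact ⟨r, hr0, hx, hr0, hrδ, hlt⟩)
  haveI : Countable ↥F := hFc.to_subtype
  -- each ball in F lies in K
  have hFK : ∀ p : ↥F, closedBall (p : X × ℝ).1 (p : X × ℝ).2 ⊆ K := fun p => by
    have hp := hFB p.2
    exact hK _ hp.1.1 _ hp.2.1 hp.2.2.1
  -- bound for each ball
  have hball : ∀ p : ↥F, lam (closedBall (p : X × ℝ).1 (p : X × ℝ).2)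
      ≤ T⁻¹ * ∫⁻ y in closedBall (p : X × ℝ).1 (p : X × ℝ).2, w y ∂lam := fun p => by
    have hp := (hFB p.2).2.2.2
    calc lam (closedBall (p : X × ℝ).1 (p : X × ℝ).2)
        = T⁻¹ * (T * lam (closedBall (p : X × ℝ).1 (p : X × ℝ).2)) := by
          rw [← mul_assoc, ENNReal.inv_mul_cancel hT0 hTtop, one_mul]
      _ ≤ _ := mul_le_mul_right hp.le _
  -- sum of integrals over balls bounded by N * integral over K
  have hsum : ∑' p : ↥F, ∫⁻ y in closedBall (p : X × ℝ).1 (p : X × ℝ).2, w y ∂lam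
      ≤ (N : ℝ≥0∞) * ∫⁻ y in K, w y ∂lam := by
    have heq : ∀ p : ↥F, ∫⁻ y in closedBall (p : X × ℝ).1 (p : X × ℝ).2, w y ∂lam
        = ∫⁻ y, (closedBall (p : X × ℝ).1 (p : X × ℝ).2).indicator w y ∂lam := fun p =>
      (lintegral_indicator measurableSet_closedBall w).symm
    calc ∑' p : ↥F, ∫⁻ y in closedBall (p : X × ℝ).1 (p : X × ℝ).2, w y ∂lam
        = ∑' p : ↥F, ∫⁻ y, (closedBall (p : X × ℝ).1 (p : X × ℝ).2).indicator w y ∂lam := by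
          simp_rw [heq]
      _ = ∫⁻ y, ∑' p : ↥F, (closedBall (p : X × ℝ).1 (p : X × ℝ).2).indicator w y ∂lam :=
          (lintegral_tsum (fun p => (hw.indicator measurableSet_closedBall))).symm
      _ ≤ ∫⁻ y, (N : ℝ≥0∞) * K.indicator w y ∂lam := by
          refine lintegral_mono fun y => ?_
          refine aux_tsum_le_of_encard_le
            (S := {p : ↥F | y ∈ closedBall (p : X × ℝ).1 (p : X × ℝ).2}) ?_
            (fun p => (closedBall (p : X × ℝ).1 (p : X × ℝ).2).indicator w y)
            ?_ (c := K.indicator w y) ?_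
          · refine le_trans ?_ (hFover y)
            have : Subtype.val '' {p : ↥F | y ∈ closedBall (p : X × ℝ).1 (p : X × ℝ).2}
                ⊆ {p ∈ F | y ∈ closedBall p.1 p.2} := by
              rintro _ ⟨q, hq, rfl⟩; exact ⟨q.2, hq⟩
            calc {p : ↥F | y ∈ closedBall (p : X × ℝ).1 (p : X × ℝ).2}.encard
                = (Subtype.val '' {p : ↥F | y ∈ closedBall (p : X × ℝ).1 (p : X × ℝ).2}).encard :=
                  (Subtype.coe_injective.encard_image _).symm
              _ ≤ _ := Set.encard_le_encard this
          · intro p hp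
            exact Set.indicator_of_notMem (by simpa using hp) w
          · intro p
            by_cases hp : y ∈ closedBall (p : X × ℝ).1 (p : X × ℝ).2
            · rw [Set.indicator_of_mem hp, Set.indicator_of_mem (hFK p hp)]
            · rw [Set.indicator_of_notMem hp]; exact zero_le
      _ = (N : ℝ≥0∞) * ∫⁻ y in K, w y ∂lam := by
          rw [lintegral_const_mul' _ _ (by simp), lintegral_indicator hKm]
  calc lam A ≤ (C : ℝ≥0∞) * lam (⋃ p ∈ F, closedBall p.1 p.2) := hFmeas
    _ ≤ (C : ℝ≥0∞) * ∑' p : ↥F, lam (closedBall (p : X × ℝ).1 (p : X × ℝ).2) :=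
        mul_le_mul_right (measure_biUnion_le lam hFc _) _
    _ ≤ (C : ℝ≥0∞) * ∑' p : ↥F, T⁻¹ * ∫⁻ y in closedBall (p : X × ℝ).1 (p : X × ℝ).2, w y ∂lam :=
        mul_le_mul_right (ENNReal.tsum_le_tsum hball) _
    _ = (C : ℝ≥0∞) * (T⁻¹ * ∑' p : ↥F, ∫⁻ y in closedBall (p : X × ℝ).1 (p : X × ℝ).2, w y ∂lam) := by
        rw [ENNReal.tsum_mul_left]
    _ ≤ _ := mul_le_mul_right (mul_le_mul_right hsum _) _

lemma aux_tendsto_avg {X : Type*} [MetricSpace X] [MeasurableSpace X] [BorelSpace X]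
    (lam : Measure X) (h : X →ᵇ ℝ) (x : X) (δ : ℝ) (hδ : 0 < δ)
    (hpos : ∀ r : ℝ, 0 < r → 0 < lam (closedBall x r))
    (hfin : ∀ r : ℝ, 0 < r → r < δ → lam (closedBall x r) < ∞) :
    Tendsto (fun r : ℝ => ((lam (closedBall x r)).toReal)⁻¹ * ∫ y in closedBall x r, h y ∂lam)
      (𝓝[>] (0:ℝ)) (𝓝 (h x)) := by
  rw [Metric.tendsto_nhds]
  intro ε hε
  obtain ⟨ρ, hρ, hcont⟩ := Metric.continuousAt_iff.1 h.continuous.continuousAt (ε/2) (half_pos hε)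
  have hmem : Ioo (0:ℝ) (min δ ρ) ∈ 𝓝[>] (0:ℝ) :=
    Ioo_mem_nhdsGT_of_mem ⟨le_refl _, lt_min hδ hρ⟩
  filter_upwards [hmem] with r hr
  set B := closedBall x r with hB
  have hr0 : 0 < r := hr.1
  have hBpos : 0 < lam B := hpos r hr0
  have hBfin : lam B < ∞ := hfin r hr0 (lt_of_lt_of_le hr.2 (min_le_left _ _))
  have htr : 0 < (lam B).toReal := ENNReal.toReal_pos hBpos.ne' hBfin.ne
  haveI : IsFiniteMeasure (lam.restrict B) :=
    ⟨by rwa [Measure.restrict_apply_univ]⟩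
  have hint : Integrable (fun y => h y) (lam.restrict B) := h.integrable _
  have key : ∫ y in B, (h y - h x) ∂lam = (∫ y in B, h y ∂lam) - (lam B).toReal * h x := by
    rw [integral_sub hint (integrable_const _), setIntegral_const, smul_eq_mul]; rfl
  have hbnd : ‖∫ y in B, (h y - h x) ∂lam‖ ≤ (ε/2) * (lam B).toReal := by
    refine norm_setIntegral_le_of_norm_le_const hBfin fun y hy => ?_
    rw [Real.norm_eq_abs, ← Real.dist_eq]
    exact (hcont (lt_of_le_of_lt (mem_closedBall.1 hy) (lt_of_lt_of_le hr.2 (min_le_right _ _)))).le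
  have hrw : ((lam B).toReal)⁻¹ * (∫ y in B, h y ∂lam) - h x
      = ((lam B).toReal)⁻¹ * ∫ y in B, (h y - h x) ∂lam := by
    rw [key]; field_simp
  rw [Real.dist_eq, hrw, abs_mul, abs_of_nonneg (inv_nonneg.2 htr.le)]
  calc ((lam B).toReal)⁻¹ * |∫ y in B, (h y - h x) ∂lam|
      ≤ ((lam B).toReal)⁻¹ * ((ε/2) * (lam B).toReal) := by
        exact mul_le_mul_of_nonneg_left (by rwa [Real.norm_eq_abs] at hbnd) (inv_nonneg.2 htr.le)
    _ = ε/2 := by field_simp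
    _ < ε := half_lt_self hε

lemma aux_local {X : Type*} [MetricSpace X] [TopologicalSpace.SeparableSpace X]
    [MeasurableSpace X] [BorelSpace X]
    (lam : Measure X) [IsLocallyFiniteMeasure lam]
    (C : ℝ≥0) (N : ℕ)
    (hyp : ∀ (A : Set X) (ℬ : Set (X × ℝ)),
      Bornology.IsBounded A →
      (∀ p ∈ ℬ, 0 < p.2) →
      (∀ x ∈ A, ∃ r : ℝ, 0 < r ∧ (x, r) ∈ ℬ) →
      ∃ F ⊆ ℬ, F.Countable ∧
        lam A ≤ (C : ℝ≥0∞) * lam (⋃ p ∈ F, closedBall p.1 p.2) ∧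
        ∀ y : X, {p ∈ F | y ∈ closedBall p.1 p.2}.encard ≤ (N : ℕ∞))
    (f : X → ℝ) (hf : ∀ x : X, ∃ U ∈ 𝓝 x, IntegrableOn f U lam) (z : X) :
    ∃ δ : ℝ, 0 < δ ∧ ∀ᵐ x ∂lam, x ∈ ball z δ →
      (∀ r : ℝ, 0 < r → 0 < lam (closedBall x r)) →
      Filter.Tendsto
        (fun r : ℝ => ((lam (closedBall x r)).toReal)⁻¹ * ∫ y in closedBall x r, f y ∂lam)
        (𝓝[>] (0:ℝ)) (𝓝 (f x)) := by
  haveI : SecondCountableTopology X := UniformSpace.secondCountable_of_separable X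
  obtain ⟨U₁, hU₁, hfU₁⟩ := hf z
  obtain ⟨U₂, hU₂, hU₂fin⟩ := lam.finiteAt_nhds z
  obtain ⟨ε, hε, hballU⟩ := Metric.mem_nhds_iff.1 (inter_mem hU₁ hU₂)
  set δ : ℝ := ε/4 with hδdef
  have hδ0 : 0 < δ := by positivity
  refine ⟨δ, hδ0, ?_⟩
  set V : Set X := ball z δ with hVdef
  set K : Set X := closedBall z (3*δ) with hKdef
  have hKU : K ⊆ U₁ ∩ U₂ := (closedBall_subset_ball (by simp only [hδdef]; linarith)).trans hballU
  have hKfin : lam K < ∞ := lt_of_le_of_lt (measure_mono (hKU.trans inter_subset_right)) hU₂fin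
  have hKm : MeasurableSet K := measurableSet_closedBall
  set g : X → ℝ := K.indicator f with hgdef
  have hg : Integrable g lam :=
    (integrable_indicator_iff hKm).2 (hfU₁.mono_set (hKU.trans inter_subset_left))
  have hVK : ∀ x ∈ V, ∀ r : ℝ, 0 < r → r < δ → closedBall x r ⊆ K := by
    intro x hx r hr0 hrδ y hy
    have h1 : dist y x ≤ r := mem_closedBall.1 hy
    have h2 : dist x z < δ := mem_ball.1 hx
    have := dist_triangle y x z
    rw [hKdef, mem_closedBall]
    linarith
  have hVsubK : V ⊆ K := fun x hx => by
    rw [hKdef, mem_closedBall]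
    have := mem_ball.1 hx
    linarith
  -- core measure-zero statement
  have core : ∀ n : ℕ, lam {x | x ∈ V ∧ (∀ r : ℝ, 0 < r → 0 < lam (closedBall x r)) ∧
      ¬ ∀ᶠ r in 𝓝[>] (0:ℝ),
        |((lam (closedBall x r)).toReal)⁻¹ * (∫ y in closedBall x r, g y ∂lam) - g x|
          < 1 / ((n : ℝ) + 1)} = 0 := by
    intro n
    set t : ℝ := 1 / ((n : ℝ) + 1) / 3 with htdef
    have ht0 : 0 < t := by positivity
    set T : ℝ≥0∞ := ENNReal.ofReal t with hTdef
    have hT0 : T ≠ 0 := (ENNReal.ofReal_pos.2 ht0).ne'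
    have hTtop : T ≠ ∞ := ENNReal.ofReal_ne_top
    have hD : (C : ℝ≥0∞) * (T⁻¹ * (N : ℝ≥0∞)) + T⁻¹ ≠ ∞ := by
      have hTinv : T⁻¹ ≠ ∞ := ENNReal.inv_ne_top.2 hT0
      exact ENNReal.add_ne_top.2 ⟨ENNReal.mul_ne_top ENNReal.coe_ne_top
        (ENNReal.mul_ne_top hTinv (ENNReal.natCast_ne_top N)), hTinv⟩
    refine aux_eq_zero_of_le_mul hD ?_
    intro η hη hηtop
    haveI hWR : (lam.restrict K).WeaklyRegular :=
      MeasureTheory.Measure.WeaklyRegular.restrict_of_measure_ne_top hKfin.ne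
    obtain ⟨h, hhb, hhint⟩ := (hg.restrict (s := K)).exists_boundedContinuous_lintegral_sub_le hη.ne'
    set b : X → ℝ := fun y => g y - h y with hbdef
    have hbm : AEStronglyMeasurable b lam :=
      hg.aestronglyMeasurable.sub h.continuous.aestronglyMeasurable
    set w : X → ℝ≥0∞ := fun y => (‖b y‖₊ : ℝ≥0∞) with hwdef
    have hwm : AEMeasurable w lam := hbm.enorm
    have hwK : ∫⁻ y in K, w y ∂lam ≤ η := hhb
    have hmax := aux_maximal lam C N hyp z δ K hKm hVK w hwm T hT0 hTtop
    set MaxSet := {x | x ∈ ball z δ ∧ ∃ r : ℝ, 0 < r ∧ r < δ ∧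
        T * lam (closedBall x r) < ∫⁻ y in closedBall x r, w y ∂lam} with hMdef
    set BigSet := {x | x ∈ V ∧ t ≤ |b x|} with hBigdef
    have hbig : lam BigSet ≤ T⁻¹ * η := by
      have h1 : BigSet ⊆ {x | T ≤ w x} ∩ K := by
        intro x hx
        refine ⟨?_, hVsubK hx.1⟩
        have : ENNReal.ofReal t ≤ ENNReal.ofReal |b x| := ENNReal.ofReal_le_ofReal hx.2
        rwa [← Real.norm_eq_abs, ofReal_norm] at this
      have h2 : lam ({x | T ≤ w x} ∩ K) = (lam.restrict K) {x | T ≤ w x} :=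
        (Measure.restrict_apply' hKm).symm
      have h3 : T * (lam.restrict K) {x | T ≤ w x} ≤ ∫⁻ y, w y ∂(lam.restrict K) :=
        mul_meas_ge_le_lintegral₀ (hwm.restrict) T
      calc lam BigSet ≤ (lam.restrict K) {x | T ≤ w x} := by
            rw [← h2]; exact measure_mono h1
        _ = T⁻¹ * (T * (lam.restrict K) {x | T ≤ w x}) := by
            rw [← mul_assoc, ENNReal.inv_mul_cancel hT0 hTtop, one_mul]
        _ ≤ T⁻¹ * ∫⁻ y, w y ∂(lam.restrict K) := mul_le_mul_right h3 _
        _ ≤ T⁻¹ * η := mul_le_mul_right hwK _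
    -- inclusion of the bad set
    have hincl : {x | x ∈ V ∧ (∀ r : ℝ, 0 < r → 0 < lam (closedBall x r)) ∧
        ¬ ∀ᶠ r in 𝓝[>] (0:ℝ),
          |((lam (closedBall x r)).toReal)⁻¹ * (∫ y in closedBall x r, g y ∂lam) - g x|
            < 1 / ((n : ℝ) + 1)} ⊆ MaxSet ∪ BigSet := by
      intro x hx
      by_contra hx'
      simp only [mem_union, not_or] at hx'
      obtain ⟨hxV, hxpos, hxbad⟩ := hx
      apply hxbad
      have hfin' : ∀ r : ℝ, 0 < r → r < δ → lam (closedBall x r) < ∞ := fun r h1 h2 =>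
        lt_of_le_of_lt (measure_mono (hVK x hxV r h1 h2)) hKfin
      have htend := aux_tendsto_avg lam h x δ hδ0 hxpos hfin'
      have hev1 : ∀ᶠ r in 𝓝[>] (0:ℝ),
          |((lam (closedBall x r)).toReal)⁻¹ * (∫ y in closedBall x r, h y ∂lam) - h x| < t := by
        have := Metric.tendsto_nhds.1 htend t ht0
        simpa [Real.dist_eq] using this
      have hbx : |b x| < t := by
        by_contra hc
        push_neg at hc
        exact hx'.2 ⟨hxV, hc⟩
      filter_upwards [hev1, Ioo_mem_nhdsGT_of_mem ⟨le_refl (0:ℝ), hδ0⟩] with r hr1 hr2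
      set B := closedBall x r with hBdef
      have hBK : B ⊆ K := hVK x hxV r hr2.1 hr2.2
      have hBfin : lam B < ∞ := hfin' r hr2.1 hr2.2
      have hBpos : 0 < lam B := hxpos r hr2.1
      have htB : 0 < (lam B).toReal := ENNReal.toReal_pos hBpos.ne' hBfin.ne
      haveI : IsFiniteMeasure (lam.restrict B) := ⟨by rwa [Measure.restrict_apply_univ]⟩
      have hhB : Integrable (fun y => h y) (lam.restrict B) := h.integrable _
      have hgB : IntegrableOn g B lam := hg.integrableOn
      have hbB : IntegrableOn b B lam := hgB.sub hhB
      have hno : ∫⁻ y in B, w y ∂lam ≤ T * lam B := by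
        by_contra hcon
        push_neg at hcon
        exact hx'.1 ⟨hxV, r, hr2.1, hr2.2, hcon⟩
      have hbbound : |∫ y in B, b y ∂lam| ≤ t * (lam B).toReal := by
        have h1 : |∫ y in B, b y ∂lam| ≤ ∫ y in B, |b y| ∂lam := by
          simpa [Real.norm_eq_abs] using norm_integral_le_integral_norm (μ := lam.restrict B) b
        have h2 : ∫ y in B, |b y| ∂lam = (∫⁻ y in B, w y ∂lam).toReal := by
          have e := integral_norm_eq_lintegral_enorm (μ := lam.restrict B) (hbm.restrict)
          simp only [Real.norm_eq_abs] at e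
          exact e
        have h3 : (∫⁻ y in B, w y ∂lam).toReal ≤ (T * lam B).toReal :=
          ENNReal.toReal_mono (ENNReal.mul_ne_top hTtop hBfin.ne) hno
        have h4 : (T * lam B).toReal = t * (lam B).toReal := by
          rw [ENNReal.toReal_mul, hTdef, ENNReal.toReal_ofReal ht0.le]
        linarith
      have hgsplit : ∫ y in B, g y ∂lam = (∫ y in B, b y ∂lam) + ∫ y in B, h y ∂lam := by
        rw [← integral_add hbB hhB]
        refine integral_congr_ae (Eventually.of_forall fun y => ?_)
        simp [hbdef]
      have hgx : g x = b x + h x := by simp [hbdef]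
      have hkey : ((lam B).toReal)⁻¹ * (∫ y in B, g y ∂lam) - g x
          = ((lam B).toReal)⁻¹ * (∫ y in B, b y ∂lam)
            + (((lam B).toReal)⁻¹ * (∫ y in B, h y ∂lam) - h x) - b x := by
        rw [hgsplit, hgx]; ring
      have hb1 : |((lam B).toReal)⁻¹ * (∫ y in B, b y ∂lam)| ≤ t := by
        rw [abs_mul, abs_of_nonneg (inv_nonneg.2 htB.le)]
        calc ((lam B).toReal)⁻¹ * |∫ y in B, b y ∂lam|
            ≤ ((lam B).toReal)⁻¹ * (t * (lam B).toReal) :=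
              mul_le_mul_of_nonneg_left hbbound (inv_nonneg.2 htB.le)
          _ = t := by field_simp
      have h3t : t + t + t = 1 / ((n : ℝ) + 1) := by rw [htdef]; ring
      calc |((lam B).toReal)⁻¹ * (∫ y in B, g y ∂lam) - g x|
          ≤ |((lam B).toReal)⁻¹ * (∫ y in B, b y ∂lam)|
            + |((lam B).toReal)⁻¹ * (∫ y in B, h y ∂lam) - h x| + |b x| := by
            rw [hkey]; exact (abs_sub _ _).trans (by gcongr; exact abs_add_le _ _)
        _ < t + t + t :=
            add_lt_add (add_lt_add_of_le_of_lt hb1 hr1) hbx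
        _ = 1 / ((n : ℝ) + 1) := h3t
    calc lam _ ≤ lam (MaxSet ∪ BigSet) := measure_mono hincl
      _ ≤ lam MaxSet + lam BigSet := measure_union_le _ _
      _ ≤ (C : ℝ≥0∞) * (T⁻¹ * ((N : ℝ≥0∞) * ∫⁻ y in K, w y ∂lam)) + T⁻¹ * η :=
          add_le_add hmax hbig
      _ ≤ (C : ℝ≥0∞) * (T⁻¹ * ((N : ℝ≥0∞) * η)) + T⁻¹ * η := by
          gcongr
      _ = ((C : ℝ≥0∞) * (T⁻¹ * (N : ℝ≥0∞)) + T⁻¹) * η := by ring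
  -- from core to a.e. convergence for g
  have hae_g : ∀ᵐ x ∂lam, x ∈ V →
      (∀ r : ℝ, 0 < r → 0 < lam (closedBall x r)) →
      Filter.Tendsto
        (fun r : ℝ => ((lam (closedBall x r)).toReal)⁻¹ * ∫ y in closedBall x r, g y ∂lam)
        (𝓝[>] (0:ℝ)) (𝓝 (g x)) := by
    have h1 : ∀ᵐ x ∂lam, ∀ n : ℕ, ¬(x ∈ V ∧ (∀ r : ℝ, 0 < r → 0 < lam (closedBall x r)) ∧
        ¬ ∀ᶠ r in 𝓝[>] (0:ℝ),
          |((lam (closedBall x r)).toReal)⁻¹ * (∫ y in closedBall x r, g y ∂lam) - g x|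
            < 1 / ((n : ℝ) + 1)) := by
      rw [ae_all_iff]
      intro n
      rw [ae_iff]
      simpa only [not_not] using core n
    filter_upwards [h1] with x hx hxV hxpos
    rw [Metric.tendsto_nhds]
    intro ε' hε'
    obtain ⟨n, hn⟩ := exists_nat_one_div_lt hε'
    have hev : ∀ᶠ r in 𝓝[>] (0:ℝ),
        |((lam (closedBall x r)).toReal)⁻¹ * (∫ y in closedBall x r, g y ∂lam) - g x|
          < 1 / ((n : ℝ) + 1) := by
      by_contra hc
      exact hx n ⟨hxV, hxpos, hc⟩
    filter_upwards [hev] with r hr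
    rw [Real.dist_eq]
    exact hr.trans hn
  -- transfer to f
  filter_upwards [hae_g] with x hx hxV hxpos
  have h1 := hx hxV hxpos
  have hgfx : g x = f x := indicator_of_mem (hVsubK hxV) f
  rw [hgfx] at h1
  refine Filter.Tendsto.congr' ?_ h1
  filter_upwards [Ioo_mem_nhdsGT_of_mem ⟨le_refl (0:ℝ), hδ0⟩] with r hr
  congr 1
  refine setIntegral_congr_fun measurableSet_closedBall fun y hy => ?_
  exact indicator_of_mem (hVK x hxV r hr.1 hr.2 hy) f

theorem stmt13 {X : Type*} [MetricSpace X] [TopologicalSpace.SeparableSpace X]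
    [MeasurableSpace X] [BorelSpace X]
    (lam : Measure X) [IsLocallyFiniteMeasure lam]
    (C : ℝ≥0) (hC : 0 < C) (N : ℕ) (hN : 0 < N)
    (hyp : ∀ (A : Set X) (ℬ : Set (X × ℝ)),
      Bornology.IsBounded A →
      (∀ p ∈ ℬ, 0 < p.2) →
      (∀ x ∈ A, ∃ r : ℝ, 0 < r ∧ (x, r) ∈ ℬ) →
      ∃ F ⊆ ℬ, F.Countable ∧
        lam A ≤ (C : ℝ≥0∞) * lam (⋃ p ∈ F, closedBall p.1 p.2) ∧
        ∀ y : X, {p ∈ F | y ∈ closedBall p.1 p.2}.encard ≤ (N : ℕ∞)) :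
    DiffThmHolds lam := by
  haveI : SecondCountableTopology X := UniformSpace.secondCountable_of_separable X
  intro f hf
  have key := fun z => aux_local lam C N hyp f hf z
  choose δ hδ0 hae using key
  obtain ⟨t, htc, htU⟩ := TopologicalSpace.countable_cover_nhds
    (f := fun z => ball z (δ z)) (fun z => ball_mem_nhds z (hδ0 z))
  have hall : ∀ᵐ x ∂lam, ∀ z ∈ t, x ∈ ball z (δ z) →
      (∀ r : ℝ, 0 < r → 0 < lam (closedBall x r)) →
      Filter.Tendsto
        (fun r : ℝ => ((lam (closedBall x r)).toReal)⁻¹ * ∫ y in closedBall x r, f y ∂lam)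
        (𝓝[>] (0:ℝ)) (𝓝 (f x)) := by
    rw [ae_ball_iff htc]
    intro z _
    exact hae z
  filter_upwards [hall, aux_ae_pos_closedBall lam] with x hx hpos
  obtain ⟨z, hz, hxz⟩ : ∃ z ∈ t, x ∈ ball z (δ z) := by
    have : x ∈ ⋃ z ∈ t, ball z (δ z) := htU ▸ mem_univ x
    simpa using this
  exact hx z hz hxz hpos
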